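/- For every morphism ψ in the monoid ⟨ψ₁,ψ₃⟩ and every n ≥ 1, the words 01·ψ^{2n}(0) and reverse(ψ^{2n}(0))·10 are equal, and the words 10·ψ^{2n}(1) and reverse(ψ^{2n}(1))·01 are equal (here ψ^{2n} denotes the 2n-fold composition of ψ with itself). -/

import Mathlib

/-- A morphism of the free monoid `{0,1}*`, determined by the images of the two
letters (`false` encodes the letter 0, `true` encodes the letter 1). -/
abbrev Morph := Bool → List Bool

/-- The identity morphism. -/
def idm : Morph := fun a => [a]

/-- Composition of morphisms: `(M σ τ)(a) = σ(τ(a))`. -/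
def M (σ τ : Morph) : Morph := fun a => (τ a).flatMap σ

/-- `compAll g [i₁, …, iₙ] = g i₁ ∘ g i₂ ∘ ⋯ ∘ g iₙ` (the identity for `n = 0`). -/
def compAll (g : Bool → Morph) (l : List Bool) : Morph :=
  l.foldr (fun i acc => M (g i) acc) idm

/-- Iterated composition of a morphism with itself. -/
def mpow (σ : Morph) : ℕ → Morph
  | 0 => idm
  | k + 1 => M σ (mpow σ k)

/-- The length-`n` prefix of an infinite word. -/
def wpref (w : ℕ → Bool) (n : ℕ) : List Bool := (List.range n).map w

/-- `σ` fixes the infinite word `w`: for every `n`, the finite word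
`σ(w(0))σ(w(1))⋯σ(w(n-1))` is a prefix of `w`. -/
def Fixes (σ : Morph) (w : ℕ → Bool) : Prop :=
  ∀ n : ℕ, (wpref w n).flatMap σ = wpref w ((wpref w n).flatMap σ).length

/-- The integer value `⌊(n+1)α + ρ⌋ - ⌊nα + ρ⌋` of the Sturmian word `s_{α,ρ}`. -/
noncomputable def sfl (α ρ : ℝ) (n : ℕ) : ℤ :=
  ⌊((n : ℝ) + 1) * α + ρ⌋ - ⌊(n : ℝ) * α + ρ⌋

/-- The integer value `⌈(n+1)α + ρ⌉ - ⌈nα + ρ⌉` of the Sturmian word `s'_{α,ρ}`. -/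
noncomputable def scl (α ρ : ℝ) (n : ℕ) : ℤ :=
  ⌈((n : ℝ) + 1) * α + ρ⌉ - ⌈(n : ℝ) * α + ρ⌉

/-- The Sturmian word `s_{α,ρ}` as an infinite binary word. -/
noncomputable def sw (α ρ : ℝ) : ℕ → Bool := fun n => decide (sfl α ρ n = 1)

/-- The Sturmian word `s'_{α,ρ}` as an infinite binary word. -/
noncomputable def sw' (α ρ : ℝ) : ℕ → Bool := fun n => decide (scl α ρ n = 1)

/-- The characteristic word `c_α = s_{α,α}`. -/
noncomputable def cw (α : ℝ) : ℕ → Bool := sw α α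

/-- `ψ₁ : 0 → 01, 1 → 0` (the Fibonacci morphism, `φ₁`). -/
def psi1 : Morph := fun a => match a with | false => [false, true] | true => [false]

/-- `ψ₃ : 0 → 0, 1 → 01` (the morphism `G`, i.e. `φ₀`). -/
def psi3 : Morph := fun a => match a with | false => [false] | true => [false, true]

/-- `ψ₄ : 0 → 0, 1 → 10`. -/
def psi4 : Morph := fun a => match a with | false => [false] | true => [true, false]

/-- `ψ₇ : 0 → 10, 1 → 1`. -/
def psi7 : Morph := fun a => match a with | false => [true, false] | true => [true]

/-- `ψ₈ : 0 → 01, 1 → 1`. -/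
def psi8 : Morph := fun a => match a with | false => [false, true] | true => [true]

/-- Time reversal of a morphism. -/
def trev (σ : Morph) : Morph := fun a => (σ a).reverse

/-- The exchange morphism `E : 0 → 1, 1 → 0`. -/
def Em : Morph := fun a => [!a]

/-- Generators `φ₀, φ₁` indexed by a bit: `false ↦ φ₀ (= ψ₃)`, `true ↦ φ₁ (= ψ₁)`. -/
def phiGen : Bool → Morph := fun b => match b with | false => psi3 | true => psi1

/-- Generators of `⟨ψ₁, ψ₃⟩`: `false` encodes the index 1 (`ψ₁`),
`true` encodes the index 3 (`ψ₃`). -/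
def g13 : Bool → Morph := fun b => match b with | false => psi1 | true => psi3

/-- Generators of `⟨ψ₃, ψ₈⟩`: `false ↦ ψ₃`, `true ↦ ψ₈`. -/
def g38 : Bool → Morph := fun b => match b with | false => psi3 | true => psi8

/-- Generators of `⟨ψ₄, ψ₇⟩`: `false ↦ ψ₄`, `true ↦ ψ₇`. -/
def g47 : Bool → Morph := fun b => match b with | false => psi4 | true => psi7

/-- The Kepler matrices `K₀ = [[1,0],[1,1]]` and `K₁ = [[0,1],[1,1]]`. -/
def K : Bool → Matrix (Fin 2) (Fin 2) ℕ
  | false => !![1, 0; 1, 1]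
  | true => !![0, 1; 1, 1]


/-! Auxiliary development for Statement 8. -/

namespace Aux8

/-- `ψ₂ = trev ψ₁ : 0 → 10, 1 → 0`. -/
def psi2 : Morph := fun a => match a with | false => [true, false] | true => [false]

lemma flatMap_append' (u v : List Bool) (f : Morph) :
    (u ++ v).flatMap f = u.flatMap f ++ v.flatMap f := List.flatMap_append

lemma rev3 (w : List Bool) : (w.flatMap psi3).reverse = w.reverse.flatMap psi4 := by
  rw [List.reverse_flatMap]
  congr 1
  funext a
  cases a <;> rfl

lemma rev1 (w : List Bool) : (w.flatMap psi1).reverse = w.reverse.flatMap psi2 := by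
  rw [List.reverse_flatMap]
  congr 1
  funext a
  cases a <;> rfl

/-- Conjugacy: `ψ₃(w)·0 = 0·ψ₄(w)`. -/
lemma conj3 (w : List Bool) : w.flatMap psi3 ++ [false] = false :: w.flatMap psi4 := by
  induction w with
  | nil => rfl
  | cons a w ih =>
      cases a <;> simp only [List.flatMap_cons, List.append_assoc, ih] <;> rfl

/-- Conjugacy: `ψ₁(w)·0 = 0·ψ₂(w)`. -/
lemma conj1 (w : List Bool) : w.flatMap psi1 ++ [false] = false :: w.flatMap psi2 := by
  induction w with
  | nil => rfl
  | cons a w ih =>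
      cases a <;> simp only [List.flatMap_cons, List.append_assoc, ih] <;> rfl

lemma T3a (w : List Bool) (h : [false, true] ++ w = w.reverse ++ [true, false]) :
    [false, true] ++ w.flatMap psi3 = (w.flatMap psi3).reverse ++ [true, false] := by
  rw [rev3]
  have h2 := congrArg (fun x : List Bool => x.flatMap psi3) h
  simp only [flatMap_append'] at h2
  have h3 : false :: ([false, true] ++ w.flatMap psi3)
      = false :: (w.reverse.flatMap psi4 ++ [true, false]) := by
    have : false :: (w.reverse.flatMap psi4 ++ [true, false])
        = (w.reverse.flatMap psi3 ++ [false]) ++ [true, false] := by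
      rw [conj3]; rfl
    rw [this]
    simpa [List.append_assoc, psi3] using h2
  injection h3

lemma T3b (w : List Bool) (h : [true, false] ++ w = w.reverse ++ [false, true]) :
    [true, false] ++ w.flatMap psi3 = (w.flatMap psi3).reverse ++ [false, true] := by
  rw [rev3]
  have h2 := congrArg (fun x : List Bool => x.flatMap psi3) h
  simp only [flatMap_append'] at h2
  have h3 : false :: ([true, false] ++ w.flatMap psi3)
      = false :: (w.reverse.flatMap psi4 ++ [false, true]) := by
    have : false :: (w.reverse.flatMap psi4 ++ [false, true])
        = (w.reverse.flatMap psi3 ++ [false]) ++ [false, true] := by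
      rw [conj3]; rfl
    rw [this]
    simpa [List.append_assoc, psi3] using h2
  injection h3

lemma T1a (w : List Bool) (h : [true, false] ++ w = w.reverse ++ [false, true]) :
    [false, true] ++ w.flatMap psi1 = (w.flatMap psi1).reverse ++ [true, false] := by
  rw [rev1]
  have h2 := congrArg (fun x : List Bool => x.flatMap psi1) h
  simp only [flatMap_append'] at h2
  have h3 : false :: ([false, true] ++ w.flatMap psi1)
      = false :: (w.reverse.flatMap psi2 ++ [true, false]) := by
    have : false :: (w.reverse.flatMap psi2 ++ [true, false])
        = (w.reverse.flatMap psi1 ++ [false]) ++ [true, false] := by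
      rw [conj1]; rfl
    rw [this]
    simpa [List.append_assoc, psi1] using h2
  injection h3

lemma T1b (w : List Bool) (h : [false, true] ++ w = w.reverse ++ [true, false]) :
    [true, false] ++ w.flatMap psi1 = (w.flatMap psi1).reverse ++ [false, true] := by
  rw [rev1]
  have h2 := congrArg (fun x : List Bool => x.flatMap psi1) h
  simp only [flatMap_append'] at h2
  have h3 : false :: ([true, false] ++ w.flatMap psi1)
      = false :: (w.reverse.flatMap psi2 ++ [false, true]) := by
    have : false :: (w.reverse.flatMap psi2 ++ [false, true])
        = (w.reverse.flatMap psi1 ++ [false]) ++ [false, true] := by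
      rw [conj1]; rfl
    rw [this]
    simpa [List.append_assoc, psi1] using h2
  injection h3

/-- The A-property: `01·σ(0) = rev(σ(0))·10` and `10·σ(1) = rev(σ(1))·01`. -/
def Astmt (s : Morph) : Prop :=
  ([false, true] ++ s false = (s false).reverse ++ [true, false]) ∧
  ([true, false] ++ s true = (s true).reverse ++ [false, true])

/-- The B-property (the swapped version). -/
def Bstmt (s : Morph) : Prop :=
  ([false, true] ++ s true = (s true).reverse ++ [true, false]) ∧
  ([true, false] ++ s false = (s false).reverse ++ [false, true])

lemma A_idm : Astmt idm := by constructor <;> rfl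

lemma A_of_A_psi3 {s : Morph} (h : Astmt s) : Astmt (M psi3 s) :=
  ⟨T3a _ h.1, T3b _ h.2⟩

lemma B_of_B_psi3 {s : Morph} (h : Bstmt s) : Bstmt (M psi3 s) :=
  ⟨T3a _ h.1, T3b _ h.2⟩

lemma B_of_A_psi1 {s : Morph} (h : Astmt s) : Bstmt (M psi1 s) :=
  ⟨T1a _ h.2, T1b _ h.1⟩

lemma A_of_B_psi1 {s : Morph} (h : Bstmt s) : Astmt (M psi1 s) :=
  ⟨T1a _ h.2, T1b _ h.1⟩

/-- Main parity lemma. -/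
lemma key (l : List Bool) :
    (Even (l.count false) → Astmt (compAll g13 l)) ∧
    (¬ Even (l.count false) → Bstmt (compAll g13 l)) := by
  induction l with
  | nil => exact ⟨fun _ => A_idm, fun h => absurd (⟨0, rfl⟩ : Even 0) h⟩
  | cons a l ih =>
      have hc : compAll g13 (a :: l) = M (g13 a) (compAll g13 l) := rfl
      cases a with
      | false =>
          rw [hc]
          have hcount : (false :: l).count false = l.count false + 1 := by
            simp [List.count_cons]
          rw [hcount]
          constructor
          · intro h
            exact A_of_B_psi1 (ih.2 (by simpa [Nat.even_add_one] using h))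
          · intro h
            exact B_of_A_psi1 (ih.1 (by simpa [Nat.even_add_one] using h))
      | true =>
          rw [hc]
          have hcount : (true :: l).count false = l.count false := by
            simp [List.count_cons]
          rw [hcount]
          exact ⟨fun h => A_of_A_psi3 (ih.1 h), fun h => B_of_B_psi3 (ih.2 h)⟩

lemma M_assoc (a b c : Morph) : M (M a b) c = M a (M b c) := by
  funext x
  simp only [M, List.flatMap_assoc]
  rfl

lemma M_idm_right (s : Morph) : M s idm = s := by
  funext x
  simp [M, idm]

lemma compAll_append (g : Bool → Morph) (l1 l2 : List Bool) :
    compAll g (l1 ++ l2) = M (compAll g l1) (compAll g l2) := by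
  induction l1 with
  | nil =>
      simp only [List.nil_append]
      show compAll g l2 = M idm (compAll g l2)
      funext x
      show compAll g l2 x = (compAll g l2 x).flatMap idm
      rw [show (idm : Morph) = fun a => [a] from rfl, List.flatMap_singleton']
  | cons a l1 ih =>
      show M (g a) (compAll g (l1 ++ l2)) = M (M (g a) (compAll g l1)) (compAll g l2)
      rw [ih, M_assoc]

lemma mpow_compAll (g : Bool → Morph) (l : List Bool) (k : ℕ) :
    mpow (compAll g l) k = compAll g ((List.replicate k l).flatten) := by
  induction k with
  | zero => rfl
  | succ k ih =>
      show M (compAll g l) (mpow (compAll g l) k) = _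
      rw [ih, List.replicate_succ, List.flatten_cons, compAll_append]

lemma count_flatten_replicate (k : ℕ) (l : List Bool) :
    ((List.replicate k l).flatten).count false = k * l.count false := by
  induction k with
  | zero => simp
  | succ k ih =>
      rw [List.replicate_succ, List.flatten_cons, List.count_append, ih]
      ring

end Aux8

/-- For every `ψ ∈ ⟨ψ₁, ψ₃⟩` and every `n ≥ 1`:
`01·ψ^{2n}(0) = reverse(ψ^{2n}(0))·10` and `10·ψ^{2n}(1) = reverse(ψ^{2n}(1))·01`. -/
theorem psi_even_power_words (l : List Bool) (n : ℕ) (hn : 1 ≤ n) :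
    [false, true] ++ (mpow (compAll g13 l) (2 * n)) false
        = ((mpow (compAll g13 l) (2 * n)) false).reverse ++ [true, false] ∧
    [true, false] ++ (mpow (compAll g13 l) (2 * n)) true
        = ((mpow (compAll g13 l) (2 * n)) true).reverse ++ [false, true] := by
  have h := (Aux8.key ((List.replicate (2 * n) l).flatten)).1
    (by rw [Aux8.count_flatten_replicate]; exact ⟨n * l.count false, by ring⟩)
  rw [Aux8.mpow_compAll]
  exact ⟨h.1, h.2⟩
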